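/- Let p be a prime and A ⊆ F_p with 0 ∉ A. Define R(A) as the set of matrices M = [[a,b],[c,d]] in SL_2(F_p) with a,b,c ∈ A. Then the cardinality of the product set R(A)·R(A) = {M·N : M, N ∈ R(A)} is at least |A|^2 · |{x : x ∈ A·A + A·A, x ≠ 0}|, where A·A + A·A = {a₁a₂ + a₃a₄ : aᵢ ∈ A}. -/

import Mathlib

open Finset Pointwise

theorem stmt_0 (p : ℕ) [Fact p.Prime] (A : Finset (ZMod p)) (hA : (0 : ZMod p) ∉ A) :
    (Finset.image₂ (· * ·)
        ((Finset.univ : Finset (Matrix (Fin 2) (Fin 2) (ZMod p))).filter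
          (fun M => M.det = 1 ∧ M 0 0 ∈ A ∧ M 0 1 ∈ A ∧ M 1 0 ∈ A))
        ((Finset.univ : Finset (Matrix (Fin 2) (Fin 2) (ZMod p))).filter
          (fun M => M.det = 1 ∧ M 0 0 ∈ A ∧ M 0 1 ∈ A ∧ M 1 0 ∈ A))).card ≥
      A.card ^ 2 * ((A * A + A * A).erase 0).card := by
  classical
  set S : Finset (ZMod p) := (A * A + A * A).erase 0 with hSdef
  -- witness functions for each x ∈ A*A + A*A
  have hw : ∀ x : ZMod p, ∃ a₁ a₂ b₁ c₂ : ZMod p,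
      x ∈ A * A + A * A →
        a₁ ∈ A ∧ a₂ ∈ A ∧ b₁ ∈ A ∧ c₂ ∈ A ∧ a₁ * a₂ + b₁ * c₂ = x := by
    intro x
    by_cases hx : x ∈ A * A + A * A
    · rw [Finset.mem_add] at hx
      obtain ⟨u, hu, v, hv, huv⟩ := hx
      rw [Finset.mem_mul] at hu hv
      obtain ⟨a₁, ha₁, a₂, ha₂, h1⟩ := hu
      obtain ⟨b₁, hb₁, c₂, hc₂, h2⟩ := hv
      exact ⟨a₁, a₂, b₁, c₂, fun _ => ⟨ha₁, ha₂, hb₁, hc₂, by rw [h1, h2]; exact huv⟩⟩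
    · exact ⟨0, 0, 0, 0, fun h => absurd h hx⟩
  choose a₁ a₂ b₁ c₂ hw using hw
  -- the injection
  set f : ZMod p × ZMod p × ZMod p → Matrix (Fin 2) (Fin 2) (ZMod p) :=
    fun t =>
      !![a₁ t.2.2, b₁ t.2.2; t.2.1, (1 + b₁ t.2.2 * t.2.1) / a₁ t.2.2] *
      !![a₂ t.2.2, t.1; c₂ t.2.2, (1 + t.1 * c₂ t.2.2) / a₂ t.2.2] with hfdef
  have key : ∀ x ∈ S, a₁ x ∈ A ∧ a₂ x ∈ A ∧ b₁ x ∈ A ∧ c₂ x ∈ A ∧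
      a₁ x * a₂ x + b₁ x * c₂ x = x := by
    intro x hx
    exact hw x (Finset.mem_of_mem_erase hx)
  have hne : ∀ a : ZMod p, a ∈ A → a ≠ 0 := by
    intro a ha h
    exact hA (h ▸ ha)
  have hmem : ∀ t ∈ A ×ˢ A ×ˢ S,
      f t ∈ (Finset.image₂ (· * ·)
        ((Finset.univ : Finset (Matrix (Fin 2) (Fin 2) (ZMod p))).filter
          (fun M => M.det = 1 ∧ M 0 0 ∈ A ∧ M 0 1 ∈ A ∧ M 1 0 ∈ A))
        ((Finset.univ : Finset (Matrix (Fin 2) (Fin 2) (ZMod p))).filter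
          (fun M => M.det = 1 ∧ M 0 0 ∈ A ∧ M 0 1 ∈ A ∧ M 1 0 ∈ A))) := by
    rintro ⟨b, c, x⟩ ht
    simp only [Finset.mem_product] at ht
    obtain ⟨hb, hc, hx⟩ := ht
    obtain ⟨ha₁, ha₂, hb₁, hc₂, hsum⟩ := key x hx
    have h1 : a₁ x ≠ 0 := hne _ ha₁
    have h2 : a₂ x ≠ 0 := hne _ ha₂
    refine Finset.mem_image₂.2 ⟨_, ?_, _, ?_, rfl⟩
    · refine Finset.mem_filter.2 ⟨Finset.mem_univ _, ?_, ?_, ?_, ?_⟩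
      · rw [Matrix.det_fin_two_of]; field_simp; ring
      · simpa using ha₁
      · simpa using hb₁
      · simpa using hc
    · refine Finset.mem_filter.2 ⟨Finset.mem_univ _, ?_, ?_, ?_, ?_⟩
      · rw [Matrix.det_fin_two_of]; field_simp; ring
      · simpa using ha₂
      · simpa using hb
      · simpa using hc₂
  have hinj : Set.InjOn f ↑(A ×ˢ A ×ˢ S) := by
    rintro ⟨b, c, x⟩ ht ⟨b', c', x'⟩ ht' heq
    simp only [Finset.coe_product, Set.mem_prod, Finset.mem_coe] at ht ht'
    obtain ⟨hb, hc, hx⟩ := ht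
    obtain ⟨hb', hc', hx'⟩ := ht'
    obtain ⟨ha₁, ha₂, hb₁, hc₂, hsum⟩ := key x hx
    obtain ⟨ha₁', ha₂', hb₁', hc₂', hsum'⟩ := key x' hx'
    have h1 : a₁ x ≠ 0 := hne _ ha₁
    have h2 : a₂ x ≠ 0 := hne _ ha₂
    have h1' : a₁ x' ≠ 0 := hne _ ha₁'
    have h2' : a₂ x' ≠ 0 := hne _ ha₂'
    have hx0 : x ≠ 0 := (Finset.mem_erase.1 hx).1
    simp only [hfdef, Matrix.mul_fin_two] at heq
    have e00 := congrFun (congrFun heq 0) 0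
    have e01 := congrFun (congrFun heq 0) 1
    have e10 := congrFun (congrFun heq 1) 0
    simp only [Matrix.of_apply, Matrix.cons_val', Matrix.cons_val_zero, Matrix.cons_val_one,
      Matrix.head_cons, Matrix.empty_val', Matrix.cons_val_fin_one, Matrix.head_fin_const] at e00 e01 e10
    -- entry (0,0) equals x resp x'
    have hxx : x = x' := by
      rw [hsum, hsum'] at e00
      exact e00
    subst hxx
    have hbb : b = b' := by
      have : b * x = b' * x := by
        field_simp at e01
        linear_combination e01 + (b' - b) * hsum
      exact mul_right_cancel₀ hx0 this
    have hcc : c = c' := by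
      have : c * x = c' * x := by
        field_simp at e10
        linear_combination e10 + (c' - c) * hsum
      exact mul_right_cancel₀ hx0 this
    simp [hbb, hcc]
  calc A.card ^ 2 * S.card = (A ×ˢ A ×ˢ S).card := by
        simp [Finset.card_product]; ring
    _ ≤ _ := Finset.card_le_card_of_injOn f hmem hinj
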